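/- Assume E(|e₁|^{r₀}) < ∞ for some r₀ > 0. Then: (a) for every s ∈ (−1, r₀], sup_{θ∈Θ} E(|z(θ, e₁)|^s) < ∞; and (b) sup_{θ∈Θ} E(|log w(θ, e₁)|) < ∞. -/

import Mathlib

open MeasureTheory Finset

/-- The Euclidean norm on `ℝ^k` (realized as `Fin k → ℝ`). -/
noncomputable def euclNorm {k : ℕ} (x : Fin k → ℝ) : ℝ := Real.sqrt (∑ i, x i ^ 2)

/-- The Euclidean unit sphere `Θ = {θ ∈ ℝ^p : ‖θ‖ = 1}` with `p = n+1`. -/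
abbrev Sph (n : ℕ) : Type := { θ : Fin (n + 1) → ℝ // euclNorm θ = 1 }

lemma aux_affine (g : ℝ → ENNReal) (hg : Measurable g) (c B : ℝ) (hB : B ≠ 0) :
    ∫⁻ u, g (c + B * u) ∂volume = ENNReal.ofReal |B⁻¹| * ∫⁻ v, g v ∂volume := by
  have h1 := lintegral_map (μ := (volume : Measure ℝ)) (f := fun x => g (c + x))
    (g := fun x => B * x) (hg.comp (measurable_const_add c)) (measurable_const_mul B)
  rw [← h1, Real.map_volume_mul_left hB, lintegral_smul_measure,
    lintegral_add_left_eq_self (fun x => g x) c, smul_eq_mul]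

lemma aux_J {s ε : ℝ} (hs : -1 < s) (hε : 0 < ε) :
    ∫⁻ v in Set.Icc (-ε) ε, (ENNReal.ofReal |v|) ^ s ∂volume < ⊤ := by
  set g : ℝ → ENNReal := fun v => (ENNReal.ofReal |v|) ^ s with hg
  have hIcc0 : ∫⁻ v in Set.Icc 0 ε, g v ∂volume < ⊤ := by
    have hint : IntegrableOn (fun v : ℝ => v ^ s) (Set.Ioc 0 ε) volume := by
      have h2 := intervalIntegral.intervalIntegrable_rpow' (a := 0) (b := ε) hs
      rwa [intervalIntegrable_iff_integrableOn_Ioc_of_le hε.le] at h2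
    have hres : (volume : Measure ℝ).restrict (Set.Icc 0 ε)
        = (volume : Measure ℝ).restrict (Set.Ioc 0 ε) :=
      (Measure.restrict_congr_set (Ioc_ae_eq_Icc)).symm
    rw [hres]
    have heq : ∫⁻ v in Set.Ioc 0 ε, g v ∂volume
        = ∫⁻ v in Set.Ioc 0 ε, ENNReal.ofReal (v ^ s) ∂volume := by
      refine setLIntegral_congr_fun measurableSet_Ioc ?_
      intro v hv
      rw [hg]
      simp only [abs_of_pos hv.1]
      exact ENNReal.ofReal_rpow_of_pos hv.1
    rw [heq, ← ofReal_integral_eq_lintegral_ofReal hint]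
    · exact ENNReal.ofReal_lt_top
    · exact (ae_restrict_iff' measurableSet_Ioc).2
        (Filter.Eventually.of_forall fun v hv => (Real.rpow_pos_of_pos hv.1 s).le)
  have hneg : ∫⁻ v in Set.Icc (-ε) 0, g v ∂volume = ∫⁻ v in Set.Icc 0 ε, g v ∂volume := by
    have hmp := Measure.measurePreserving_neg (volume : Measure ℝ)
    have hemb : MeasurableEmbedding (Neg.neg : ℝ → ℝ) :=
      (Homeomorph.neg ℝ).measurableEmbedding
    have h3 := MeasurePreserving.setLIntegral_comp_emb hmp hemb g (Set.Icc 0 ε)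
    have himg : (Neg.neg : ℝ → ℝ) '' Set.Icc 0 ε = Set.Icc (-ε) 0 := by
      rw [Set.image_neg_eq_neg, Set.neg_Icc, neg_zero]
    rw [himg] at h3
    rw [← h3]
    refine setLIntegral_congr_fun measurableSet_Icc ?_
    intro v _
    simp [hg, abs_neg]
  have hsplit : Set.Icc (-ε) ε = Set.Icc (-ε) 0 ∪ Set.Ioc 0 ε := by
    rw [Set.Icc_union_Ioc_eq_Icc (by linarith) hε.le]
  rw [hsplit, lintegral_union measurableSet_Ioc
    (Set.disjoint_left.mpr fun x hx hx' => absurd hx'.1 (not_lt.mpr hx.2))]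
  have hle : ∫⁻ v in Set.Ioc 0 ε, g v ∂volume ≤ ∫⁻ v in Set.Icc 0 ε, g v ∂volume :=
    lintegral_mono_set Set.Ioc_subset_Icc_self
  calc ∫⁻ v in Set.Icc (-ε) 0, g v ∂volume + ∫⁻ v in Set.Ioc 0 ε, g v ∂volume
      ≤ ∫⁻ v in Set.Icc 0 ε, g v ∂volume + ∫⁻ v in Set.Icc 0 ε, g v ∂volume := by
        rw [hneg]; exact add_le_add le_rfl hle
    _ < ⊤ := ENNReal.add_lt_top.2 ⟨hIcc0, hIcc0⟩

lemma partA {Ω : Type*} [MeasurableSpace Ω] (μ : Measure Ω) [IsProbabilityMeasure μ]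
    (e : Ω → ℝ) (he : Measurable e)
    (f : ℝ → ℝ) (hf0 : ∀ u, 0 ≤ f u) (hfm : Measurable f)
    (hlaw : μ.map e = volume.withDensity (fun u => ENNReal.ofReal (f u)))
    (L₀ : ℝ) (hL₀ : ∀ u, (1 + |u|) * f u ≤ L₀)
    (r₀ : ℝ) (hr₀ : 0 < r₀) (hmom : Integrable (fun ω => |e ω| ^ r₀) μ)
    (L₂ L₁ : ℝ) (hL₁0 : 0 < L₁)
    (s : ℝ) (hs1 : -1 < s) (hs2 : s ≤ r₀) :
    ∃ C : ENNReal, C ≠ ⊤ ∧ ∀ A B : ℝ, 0 ≤ B → max |A| B ≤ L₂ → L₁ ≤ max |A| B →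
      ∫⁻ ω, (ENNReal.ofReal |A + B * e ω|) ^ s ∂μ ≤ C := by
  rcases lt_or_ge s 0 with hs0 | hs0
  · -- negative exponent case
    set ε := L₁ / 2 with hεdef
    have hε : 0 < ε := by positivity
    set c := 2 * L₀ / L₁ with hcdef
    set gI : ℝ → ENNReal := (Set.Icc (-ε) ε).indicator (fun v => (ENNReal.ofReal |v|) ^ s)
      with hgIdef
    have hgIm : Measurable gI :=
      Measurable.indicator ((measurable_id.abs.ennreal_ofReal).pow_const s) measurableSet_Icc
    set J := ∫⁻ v, gI v ∂volume with hJdef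
    have hJ : J < ⊤ := by
      rw [hJdef, hgIdef, lintegral_indicator measurableSet_Icc]
      exact aux_J hs1 hε
    have hL₀0 : 0 ≤ L₀ := by have := hL₀ 0; nlinarith [hf0 0, abs_nonneg (0:ℝ)]
    have hc0 : 0 ≤ c := by positivity
    refine ⟨ENNReal.ofReal (ε ^ s) + ENNReal.ofReal c * J, ?_, ?_⟩
    · exact ENNReal.add_ne_top.2 ⟨ENNReal.ofReal_ne_top,
        ENNReal.mul_ne_top ENNReal.ofReal_ne_top hJ.ne⟩
    intro A B hB hle hge
    -- key rewrite to an integral over ℝ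
    have hGm : Measurable (fun x : ℝ => (ENNReal.ofReal |A + B * x|) ^ s) :=
      (((measurable_const_mul B).const_add A).abs.ennreal_ofReal).pow_const s
    have hkey : ∫⁻ ω, (ENNReal.ofReal |A + B * e ω|) ^ s ∂μ
        = ∫⁻ u, (ENNReal.ofReal |A + B * u|) ^ s * ENNReal.ofReal (f u) ∂volume := by
      rw [← lintegral_map hGm he, hlaw,
        lintegral_withDensity_eq_lintegral_mul volume hfm.ennreal_ofReal hGm]
      exact lintegral_congr fun u => mul_comm _ _
    have hfint : ∫⁻ u, ENNReal.ofReal (f u) ∂volume = 1 := by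
      have h0 : (volume.withDensity fun u => ENNReal.ofReal (f u)) Set.univ = 1 := by
        rw [← hlaw, Measure.map_apply he MeasurableSet.univ]; simp
      rwa [withDensity_apply _ MeasurableSet.univ, Measure.restrict_univ] at h0
    have master : ∀ u, (ENNReal.ofReal |A + B * u|) ^ s * ENNReal.ofReal (f u)
        ≤ ENNReal.ofReal (ε ^ s) * ENNReal.ofReal (f u)
          + ENNReal.ofReal (c * B) * gI (A + B * u) := by
      intro u
      by_cases hZ : |A + B * u| ≤ ε
      · have hmem : A + B * u ∈ Set.Icc (-ε) ε := abs_le.1 hZ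
        rw [hgIdef, Set.indicator_of_mem hmem]
        have hfu : f u ≤ c * B := by
          rcases le_or_gt L₁ B with h | h
          · have h1 : f u ≤ L₀ := by nlinarith [hL₀ u, hf0 u, abs_nonneg u]
            have h2 : L₀ ≤ c * B := by
              rw [hcdef, div_mul_eq_mul_div, le_div_iff₀ hL₁0]; nlinarith
            linarith
          · have hA : L₁ ≤ |A| := by
              rcases le_max_iff.1 hge with h' | h'
              · exact h'
              · linarith
            have habs : |B * u| = B * |u| := by rw [abs_mul, abs_of_nonneg hB]
            have h2 : |A| - |A + B * u| ≤ |B * u| := by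
              have h3 : |A| - |A + B * u| ≤ |A - (A + B * u)| := abs_sub_abs_le_abs_sub _ _
              have h4 : |A - (A + B * u)| = |B * u| := by
                rw [show A - (A + B * u) = -(B * u) by ring, abs_neg]
              linarith
            have h1 : L₁ / 2 ≤ B * |u| := by rw [← habs]; rw [hεdef] at hZ; linarith
            rw [hcdef, div_mul_eq_mul_div, le_div_iff₀ hL₁0]
            nlinarith [mul_le_mul_of_nonneg_left h1 (hf0 u),
              mul_le_mul_of_nonneg_left (hL₀ u) hB, mul_nonneg hB (hf0 u)]
        calc (ENNReal.ofReal |A + B * u|) ^ s * ENNReal.ofReal (f u)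
            ≤ (ENNReal.ofReal |A + B * u|) ^ s * ENNReal.ofReal (c * B) :=
              mul_le_mul_right (ENNReal.ofReal_le_ofReal hfu) _
          _ = ENNReal.ofReal (c * B) * (ENNReal.ofReal |A + B * u|) ^ s := mul_comm _ _
          _ ≤ _ := le_add_self
      · push_neg at hZ
        have hZpos : (0:ℝ) < |A + B * u| := lt_trans hε hZ
        have hle1 : (ENNReal.ofReal |A + B * u|) ^ s ≤ ENNReal.ofReal (ε ^ s) := by
          rw [ENNReal.ofReal_rpow_of_pos hZpos]
          exact ENNReal.ofReal_le_ofReal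
            (Real.rpow_le_rpow_of_nonpos hε hZ.le hs0.le)
        calc (ENNReal.ofReal |A + B * u|) ^ s * ENNReal.ofReal (f u)
            ≤ ENNReal.ofReal (ε ^ s) * ENNReal.ofReal (f u) := mul_le_mul_left hle1 _
          _ ≤ _ := le_self_add
    calc ∫⁻ ω, (ENNReal.ofReal |A + B * e ω|) ^ s ∂μ
        = ∫⁻ u, (ENNReal.ofReal |A + B * u|) ^ s * ENNReal.ofReal (f u) ∂volume := hkey
      _ ≤ ∫⁻ u, (ENNReal.ofReal (ε ^ s) * ENNReal.ofReal (f u)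
            + ENNReal.ofReal (c * B) * gI (A + B * u)) ∂volume := lintegral_mono master
      _ = ENNReal.ofReal (ε ^ s) * ∫⁻ u, ENNReal.ofReal (f u) ∂volume
            + ENNReal.ofReal (c * B) * ∫⁻ u, gI (A + B * u) ∂volume := by
          rw [lintegral_add_left (hfm.ennreal_ofReal.const_mul _),
            lintegral_const_mul' _ _ ENNReal.ofReal_ne_top,
            lintegral_const_mul' _ _ ENNReal.ofReal_ne_top]
      _ ≤ ENNReal.ofReal (ε ^ s) + ENNReal.ofReal c * J := by
          rw [hfint, mul_one]
          refine add_le_add le_rfl ?_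
          rcases eq_or_lt_of_le hB with hB0 | hB0
          · have hz0 : ∀ u : ℝ, gI (A + B * u) = 0 := by
              intro u
              have hAL : L₁ ≤ |A| := by
                rcases le_max_iff.1 hge with h' | h'
                · exact h'
                · rw [← hB0] at h'; linarith
              rw [hgIdef, Set.indicator_of_notMem]
              intro hmem
              have h5 := abs_le.2 hmem
              rw [← hB0] at h5
              simp only [zero_mul, add_zero] at h5
              rw [hεdef] at h5; linarith
            simp only [hz0, lintegral_zero, mul_zero]
            exact zero_le
          · rw [aux_affine gI hgIm A B (ne_of_gt hB0)]
            rw [← mul_assoc, abs_of_pos (inv_pos.2 hB0), ← ENNReal.ofReal_mul (by positivity)]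
            rw [mul_assoc c B B⁻¹, mul_inv_cancel₀ (ne_of_gt hB0), mul_one]
  · -- nonnegative exponent case
    set M := max L₂ 1 with hMdef
    have hM1 : (1:ℝ) ≤ M := le_max_right _ _
    set K := (2 * M) ^ r₀ with hKdef
    have hmomlt : ∫⁻ ω, ENNReal.ofReal (|e ω| ^ r₀) ∂μ < ⊤ := by
      rw [← ofReal_integral_eq_lintegral_ofReal hmom
        (Filter.Eventually.of_forall fun ω => by positivity)]
      exact ENNReal.ofReal_lt_top
    refine ⟨ENNReal.ofReal K * (1 + ∫⁻ ω, ENNReal.ofReal (|e ω| ^ r₀) ∂μ), ?_, ?_⟩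
    · exact ENNReal.mul_ne_top ENNReal.ofReal_ne_top
        (by simp [ENNReal.add_ne_top, hmomlt.ne])
    intro A B hB hle hge
    have hpt : ∀ ω, (ENNReal.ofReal |A + B * e ω|) ^ s
        ≤ ENNReal.ofReal K * (1 + ENNReal.ofReal (|e ω| ^ r₀)) := by
      intro ω
      set u := e ω with hudef
      have hA : |A| ≤ M := le_trans (le_trans (le_max_left _ _) hle) (le_max_left _ _)
      have hBM : B ≤ M := le_trans (le_trans (le_max_right _ _) hle) (le_max_left _ _)
      have h1 : |A + B * u| ≤ M * (1 + |u|) := by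
        calc |A + B * u| ≤ |A| + B * |u| := by
              rw [show B * |u| = |B * u| by rw [abs_mul, abs_of_nonneg hB]]
              exact abs_add_le _ _
          _ ≤ M + M * |u| := add_le_add hA
              (mul_le_mul_of_nonneg_right hBM (abs_nonneg _))
          _ = M * (1 + |u|) := by ring
      have hstep4 : (M * (1 + |u|)) ^ r₀ ≤ K * (1 + |u| ^ r₀) := by
        have hK0 : 0 ≤ K := by positivity
        rcases le_total |u| 1 with h | h
        · have h5 : (M * (1 + |u|)) ^ r₀ ≤ (2 * M) ^ r₀ := by
            apply Real.rpow_le_rpow (by positivity) (by nlinarith) hr₀.le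
          have h2 : (1:ℝ) ≤ 1 + |u| ^ r₀ := by
            linarith [Real.rpow_nonneg (abs_nonneg u) r₀]
          calc (M * (1 + |u|)) ^ r₀ ≤ (2 * M) ^ r₀ := h5
            _ = K := rfl
            _ ≤ K * (1 + |u| ^ r₀) := le_mul_of_one_le_right hK0 h2
        · have h2 : (M * (1 + |u|)) ^ r₀ ≤ (2 * M * |u|) ^ r₀ := by
            apply Real.rpow_le_rpow (by positivity) (by nlinarith) hr₀.le
          have h3 : (2 * M * |u|) ^ r₀ = K * |u| ^ r₀ := by
            rw [hKdef, ← Real.mul_rpow (by positivity) (abs_nonneg _)]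
          have h4 : K * |u| ^ r₀ ≤ K * (1 + |u| ^ r₀) := by
            apply mul_le_mul_of_nonneg_left
              (by linarith [Real.rpow_nonneg (abs_nonneg u) r₀]) hK0
          linarith
      calc (ENNReal.ofReal |A + B * u|) ^ s
          ≤ (ENNReal.ofReal (M * (1 + |u|))) ^ s :=
            ENNReal.rpow_le_rpow (ENNReal.ofReal_le_ofReal h1) hs0
        _ ≤ (ENNReal.ofReal (M * (1 + |u|))) ^ r₀ := by
            apply ENNReal.rpow_le_rpow_of_exponent_le _ hs2
            rw [ENNReal.one_le_ofReal]
            nlinarith [abs_nonneg u]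
        _ = ENNReal.ofReal ((M * (1 + |u|)) ^ r₀) :=
            ENNReal.ofReal_rpow_of_pos (by nlinarith [abs_nonneg u])
        _ ≤ ENNReal.ofReal (K * (1 + |u| ^ r₀)) := ENNReal.ofReal_le_ofReal hstep4
        _ = ENNReal.ofReal K * (1 + ENNReal.ofReal (|u| ^ r₀)) := by
            rw [ENNReal.ofReal_mul (by positivity), ENNReal.ofReal_add one_pos.le (by positivity),
              ENNReal.ofReal_one]
    calc ∫⁻ ω, (ENNReal.ofReal |A + B * e ω|) ^ s ∂μ
        ≤ ∫⁻ ω, ENNReal.ofReal K * (1 + ENNReal.ofReal (|e ω| ^ r₀)) ∂μ := lintegral_mono hpt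
      _ = ENNReal.ofReal K * (1 + ∫⁻ ω, ENNReal.ofReal (|e ω| ^ r₀) ∂μ) := by
          rw [lintegral_const_mul' _ _ ENNReal.ofReal_ne_top,
            lintegral_add_left measurable_const, lintegral_one, measure_univ]

/-- On the unit sphere `Θ ⊂ ℝ^p` (`p = n+1`), with
`z(θ,u) = a_*(θ) + b_*(θ)u` and `w(θ,u) = ‖(z(θ,u),θ₁,…,θ_{p−1})‖`, where `a_*, b_*`
are bounded Borel, `b_* ≥ 0`, `inf_θ max(|a_*(θ)|,b_*(θ)) > 0`, and `e₁` has a density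
`f` with `sup_u (1+|u|)f(u) < ∞` and `E(|e₁|^{r₀}) < ∞`:
(a) for every `s ∈ (−1, r₀]`, `sup_θ E(|z(θ,e₁)|^s) < ∞` (here `|z|^s = +∞` when
`z = 0` and `s < 0`, so the expectation is the lower integral in `ℝ≥0∞`); and
(b) `sup_θ E(|log w(θ,e₁)|) < ∞`. -/
theorem stmt12 {Ω : Type*} [MeasurableSpace Ω] (μ : Measure Ω) [IsProbabilityMeasure μ]
    (n : ℕ) (e : Ω → ℝ) (he : Measurable e)
    (f : ℝ → ℝ) (hf0 : ∀ u, 0 ≤ f u) (hfm : Measurable f)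
    (hlaw : μ.map e = volume.withDensity (fun u => ENNReal.ofReal (f u)))
    (L₀ : ℝ) (hL₀ : ∀ u, (1 + |u|) * f u ≤ L₀)
    (r₀ : ℝ) (hr₀ : 0 < r₀) (hmom : Integrable (fun ω => |e ω| ^ r₀) μ)
    (a b : Sph n → ℝ) (ham : Measurable a) (hbm : Measurable b) (hb0 : ∀ θ, 0 ≤ b θ)
    (L₂ : ℝ) (hL₂ : ∀ θ, max |a θ| (b θ) ≤ L₂)
    (L₁ : ℝ) (hL₁0 : 0 < L₁) (hL₁ : ∀ θ, L₁ ≤ max |a θ| (b θ))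
    (z : Sph n → ℝ → ℝ) (hz : ∀ θ u, z θ u = a θ + b θ * u)
    (w : Sph n → ℝ → ℝ)
    (hw : ∀ θ u, w θ u =
      euclNorm (Fin.cons (z θ u) (fun i : Fin n => (θ : Fin (n + 1) → ℝ) i.castSucc))) :
    (∀ s : ℝ, -1 < s → s ≤ r₀ →
        ∃ C : ENNReal, C ≠ ⊤ ∧ ∀ θ : Sph n,
          ∫⁻ ω, (ENNReal.ofReal |z θ (e ω)|) ^ s ∂μ ≤ C) ∧
      ∃ C : ℝ, ∀ θ : Sph n,
        ∫⁻ ω, ENNReal.ofReal |Real.log (w θ (e ω))| ∂μ ≤ ENNReal.ofReal C := by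
  have partAmain : ∀ s : ℝ, -1 < s → s ≤ r₀ →
      ∃ C : ENNReal, C ≠ ⊤ ∧ ∀ θ : Sph n,
        ∫⁻ ω, (ENNReal.ofReal |z θ (e ω)|) ^ s ∂μ ≤ C := by
    intro s hs1 hs2
    obtain ⟨C, hC, h⟩ := partA μ e he f hf0 hfm hlaw L₀ hL₀ r₀ hr₀ hmom L₂ L₁ hL₁0 s hs1 hs2
    refine ⟨C, hC, fun θ => ?_⟩
    simp only [hz]
    exact h (a θ) (b θ) (hb0 θ) (hL₂ θ) (hL₁ θ)
  refine ⟨partAmain, ?_⟩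
  -- part (b)
  set r := min r₀ 1 with hrdef
  have hrpos : 0 < r := lt_min hr₀ one_pos
  have hr1 : r ≤ 1 := min_le_right _ _
  obtain ⟨C₁, hC₁, h₁⟩ := partAmain r (by linarith) (min_le_left _ _)
  obtain ⟨C₂, hC₂, h₂⟩ := partAmain (-(1/2) : ℝ) (by norm_num) (by norm_num; linarith)
  set K₁ := r⁻¹ * 2 ^ r with hK₁def
  have hK₁0 : 0 ≤ K₁ := by positivity
  -- bounds on w in terms of z
  have hwZ : ∀ (θ : Sph n) (u : ℝ), |z θ u| ≤ w θ u ∧ w θ u ≤ 1 + |z θ u| := by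
    intro θ u
    have hθ : ∑ i, ((θ : Fin (n+1) → ℝ) i) ^ 2 = 1 := by
      have h6 := θ.2
      rw [euclNorm, Real.sqrt_eq_one] at h6
      exact h6
    set T := ∑ i : Fin n, ((θ : Fin (n+1) → ℝ) i.castSucc) ^ 2 with hT
    have hT0 : 0 ≤ T := Finset.sum_nonneg fun _ _ => sq_nonneg _
    have hT1 : T ≤ 1 := by
      rw [Fin.sum_univ_castSucc] at hθ
      nlinarith [sq_nonneg ((θ : Fin (n+1) → ℝ) (Fin.last n))]
    have hsum : w θ u = Real.sqrt ((z θ u) ^ 2 + T) := by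
      rw [hw, euclNorm]
      congr 1
      rw [Fin.sum_univ_succ]
      simp [hT]
    constructor
    · rw [hsum]
      calc |z θ u| = Real.sqrt ((z θ u) ^ 2) := (Real.sqrt_sq_eq_abs _).symm
        _ ≤ _ := Real.sqrt_le_sqrt (by linarith)
    · rw [hsum]
      have h7 : Real.sqrt ((z θ u) ^ 2 + T) ≤ Real.sqrt ((1 + |z θ u|) ^ 2) :=
        Real.sqrt_le_sqrt (by nlinarith [sq_abs (z θ u), abs_nonneg (z θ u)])
      rwa [Real.sqrt_sq (by positivity)] at h7
  -- pointwise bound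
  have claim : ∀ (θ : Sph n) (u : ℝ), ENNReal.ofReal |Real.log (w θ u)|
      ≤ ENNReal.ofReal K₁ * (1 + (ENNReal.ofReal |z θ u|) ^ r)
        + ENNReal.ofReal 2 * (ENNReal.ofReal |z θ u|) ^ (-(1/2) : ℝ) := by
    intro θ u
    obtain ⟨hlow, hupp⟩ := hwZ θ u
    have hW0 : 0 ≤ w θ u := le_trans (abs_nonneg _) hlow
    rcases eq_or_lt_of_le hW0 with h0 | hWpos
    · rw [← h0, Real.log_zero, abs_zero, ENNReal.ofReal_zero]
      exact zero_le
    rcases le_or_gt 1 (w θ u) with hW1 | hW1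
    · -- W ≥ 1
      have hlog : |Real.log (w θ u)| = Real.log (w θ u) :=
        abs_of_nonneg (Real.log_nonneg hW1)
      have h1 : Real.log (w θ u) ≤ r⁻¹ * (w θ u) ^ r := by
        have hlr := Real.log_rpow hWpos r
        have h2 : Real.log ((w θ u) ^ r) ≤ (w θ u) ^ r :=
          Real.log_le_self (Real.rpow_nonneg hW0 r)
        calc Real.log (w θ u) = r⁻¹ * (r * Real.log (w θ u)) := by
              field_simp
          _ = r⁻¹ * Real.log ((w θ u) ^ r) := by rw [hlr]
          _ ≤ r⁻¹ * (w θ u) ^ r := by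
              apply mul_le_mul_of_nonneg_left h2 (by positivity)
    
      have h2 : (w θ u) ^ r ≤ 2 ^ r * (1 + |z θ u| ^ r) := by
        have h20 : (0:ℝ) ≤ 2 ^ (r:ℝ) := by positivity
        rcases le_total |z θ u| 1 with h | h
        · have h3 : (w θ u) ^ r ≤ (2:ℝ) ^ r :=
            Real.rpow_le_rpow hW0 (by linarith) hrpos.le
          have h4 : (1:ℝ) ≤ 1 + |z θ u| ^ r := by
            linarith [Real.rpow_nonneg (abs_nonneg (z θ u)) r]
          calc (w θ u) ^ r ≤ (2:ℝ) ^ r := h3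
            _ ≤ 2 ^ r * (1 + |z θ u| ^ r) := le_mul_of_one_le_right h20 h4
        · have h3 : (w θ u) ^ r ≤ (2 * |z θ u|) ^ r :=
            Real.rpow_le_rpow hW0 (by linarith) hrpos.le
          have h4 : (2 * |z θ u|) ^ r = 2 ^ r * |z θ u| ^ r :=
            Real.mul_rpow (by norm_num) (abs_nonneg _)
          have h5 : 2 ^ r * |z θ u| ^ r ≤ 2 ^ r * (1 + |z θ u| ^ r) := by
            apply mul_le_mul_of_nonneg_left (by linarith) h20
          linarith
      have hfinal : |Real.log (w θ u)| ≤ K₁ * (1 + |z θ u| ^ r) := by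
        rw [hlog, hK₁def]
        calc Real.log (w θ u) ≤ r⁻¹ * (w θ u) ^ r := h1
          _ ≤ r⁻¹ * (2 ^ r * (1 + |z θ u| ^ r)) :=
              mul_le_mul_of_nonneg_left h2 (by positivity)
          _ = r⁻¹ * 2 ^ r * (1 + |z θ u| ^ r) := by ring
      calc ENNReal.ofReal |Real.log (w θ u)|
          ≤ ENNReal.ofReal (K₁ * (1 + |z θ u| ^ r)) := ENNReal.ofReal_le_ofReal hfinal
        _ = ENNReal.ofReal K₁ * (1 + (ENNReal.ofReal |z θ u|) ^ r) := by
            rw [ENNReal.ofReal_mul hK₁0, ENNReal.ofReal_add one_pos.le (by positivity),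
              ENNReal.ofReal_one, ENNReal.ofReal_rpow_of_nonneg (abs_nonneg _) hrpos.le]
        _ ≤ _ := le_self_add
    · -- 0 < W < 1
      have hlog : |Real.log (w θ u)| = -Real.log (w θ u) :=
        abs_of_nonpos (Real.log_nonpos hW0 hW1.le)
      have h1 : -Real.log (w θ u) ≤ 2 * (w θ u) ^ (-(1/2) : ℝ) := by
        have hinv : -Real.log (w θ u) = Real.log (w θ u)⁻¹ := (Real.log_inv _).symm
        have h2 : Real.log ((w θ u)⁻¹) = 2 * Real.log (((w θ u)⁻¹) ^ ((1:ℝ)/2)) := by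
          rw [Real.log_rpow (inv_pos.2 hWpos)]; ring
        have h3 : Real.log (((w θ u)⁻¹) ^ ((1:ℝ)/2)) ≤ ((w θ u)⁻¹) ^ ((1:ℝ)/2) :=
          Real.log_le_self (Real.rpow_nonneg (inv_nonneg.2 hW0) _)
        have h4 : ((w θ u)⁻¹) ^ ((1:ℝ)/2) = (w θ u) ^ (-(1/2) : ℝ) := by
          rw [Real.inv_rpow hW0, ← Real.rpow_neg hW0]
        rw [hinv, h2, h4]
        have : Real.log ((w θ u) ^ (-(1/2):ℝ)) ≤ (w θ u) ^ (-(1/2):ℝ) := by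
          rw [← h4]; exact h3
        linarith
      by_cases hZ0 : z θ u = 0
      · have htop : (ENNReal.ofReal |z θ u|) ^ (-(1/2) : ℝ) = ⊤ := by
          rw [hZ0, abs_zero, ENNReal.ofReal_zero]
          rw [ENNReal.zero_rpow_of_neg (by norm_num)]
        rw [htop, ENNReal.mul_top (by simp), add_top]
        exact le_top
      · have hZpos : 0 < |z θ u| := abs_pos.2 hZ0
        have h4 : (w θ u) ^ (-(1/2):ℝ) ≤ |z θ u| ^ (-(1/2):ℝ) :=
          Real.rpow_le_rpow_of_nonpos hZpos hlow (by norm_num)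
        have hfinal : |Real.log (w θ u)| ≤ 2 * |z θ u| ^ (-(1/2):ℝ) := by
          rw [hlog]; linarith
        calc ENNReal.ofReal |Real.log (w θ u)|
            ≤ ENNReal.ofReal (2 * |z θ u| ^ (-(1/2):ℝ)) := ENNReal.ofReal_le_ofReal hfinal
          _ = ENNReal.ofReal 2 * (ENNReal.ofReal |z θ u|) ^ (-(1/2):ℝ) := by
              rw [ENNReal.ofReal_mul (by norm_num), ENNReal.ofReal_rpow_of_pos hZpos]
          _ ≤ _ := le_add_self
  -- integrate the pointwise bound
  set Btot := ENNReal.ofReal K₁ * (1 + C₁) + ENNReal.ofReal 2 * C₂ with hBdef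
  have hBne : Btot ≠ ⊤ := by
    rw [hBdef]
    exact ENNReal.add_ne_top.2
      ⟨ENNReal.mul_ne_top ENNReal.ofReal_ne_top (by simp [ENNReal.add_ne_top, hC₁]),
        ENNReal.mul_ne_top ENNReal.ofReal_ne_top hC₂⟩
  refine ⟨Btot.toReal, fun θ => ?_⟩
  rw [ENNReal.ofReal_toReal hBne]
  have hg1m : Measurable fun ω => (ENNReal.ofReal |z θ (e ω)|) ^ r := by
    simp only [hz]
    exact (((he.const_mul (b θ)).const_add (a θ)).abs.ennreal_ofReal).pow_const r
  calc ∫⁻ ω, ENNReal.ofReal |Real.log (w θ (e ω))| ∂μ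
      ≤ ∫⁻ ω, (ENNReal.ofReal K₁ * (1 + (ENNReal.ofReal |z θ (e ω)|) ^ r)
          + ENNReal.ofReal 2 * (ENNReal.ofReal |z θ (e ω)|) ^ (-(1/2) : ℝ)) ∂μ :=
        lintegral_mono fun ω => claim θ (e ω)
    _ = ENNReal.ofReal K₁ * (1 + ∫⁻ ω, (ENNReal.ofReal |z θ (e ω)|) ^ r ∂μ)
          + ENNReal.ofReal 2 * ∫⁻ ω, (ENNReal.ofReal |z θ (e ω)|) ^ (-(1/2) : ℝ) ∂μ := by
        rw [lintegral_add_left (f := fun ω => ENNReal.ofReal K₁ * (1 + (ENNReal.ofReal |z θ (e ω)|) ^ r))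
            ((measurable_const.add hg1m).const_mul _),
          lintegral_const_mul' _ _ ENNReal.ofReal_ne_top,
          lintegral_const_mul' _ _ ENNReal.ofReal_ne_top,
          lintegral_add_left measurable_const, lintegral_one, measure_univ]
    _ ≤ Btot := by
        rw [hBdef]
        exact add_le_add
          (mul_le_mul_right (add_le_add le_rfl (h₁ θ)) _)
          (mul_le_mul_right (h₂ θ) _)
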